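/- There exist a complex Hilbert space H, a norm-closed right ideal A of B(H) (a norm-closed linear subspace with a ∘ T ∈ A for all a ∈ A and T ∈ B(H)), and an element a ∈ A with the following properties: (i) A has a contractive approximate left identity, i.e., a sequence (u_n) in A with ‖u_n‖ ≤ 1 for all n and ‖u_n ∘ b − b‖ → 0 for every b ∈ A; and (ii) for every sequence (e_n) in A with ‖e_n‖ ≤ 1 for all n and ‖e_n ∘ b − b‖ → 0 for every b ∈ A, the sequence (a ∘ e_n) does not converge in operator norm. -/

import Mathlib

open scoped ENNReal
open Function

noncomputable section
namespace Stmt13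

abbrev H : Type := lp (fun _ : ℕ => ℂ) 2

lemma htwo : (0:ℝ) < (2 : ℝ≥0∞).toReal := by norm_num

section builders

variable (g : ℕ → ℕ) (w : ℕ → ℂ)

/-- underlying function of the "push" weighted operator -/
def pushWfun (x : H) : ℕ → ℂ := Function.extend g (fun k => w k * x k) 0

/-- underlying function of the "pull" weighted operator -/
def pullWfun (x : H) : ℕ → ℂ := fun k => w k * x (g k)

variable {g w} {C : ℝ}

lemma summable_base (hC : 0 ≤ C) (hw : ∀ k, ‖w k‖ ≤ C) (x : H) :
    Summable (fun k => ‖w k * x k‖ ^ (2 : ℝ≥0∞).toReal) := by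
  have hx : Summable (fun k => ‖x k‖ ^ (2 : ℝ≥0∞).toReal) := (lp.memℓp x).summable htwo
  refine Summable.of_nonneg_of_le (fun k => Real.rpow_nonneg (norm_nonneg _) _)
    (fun k => ?_) (hx.mul_left (C ^ (2 : ℝ≥0∞).toReal))
  have h1 : ‖w k * x k‖ ≤ C * ‖x k‖ := by
    rw [norm_mul]
    exact mul_le_mul_of_nonneg_right (hw k) (norm_nonneg _)
  calc ‖w k * x k‖ ^ (2 : ℝ≥0∞).toReal ≤ (C * ‖x k‖) ^ (2 : ℝ≥0∞).toReal :=
        Real.rpow_le_rpow (norm_nonneg _) h1 htwo.le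
    _ = C ^ (2 : ℝ≥0∞).toReal * ‖x k‖ ^ (2 : ℝ≥0∞).toReal :=
        Real.mul_rpow hC (norm_nonneg _)

lemma tsum_base_le (hC : 0 ≤ C) (hw : ∀ k, ‖w k‖ ≤ C) (x : H) :
    ∑' k, ‖w k * x k‖ ^ (2 : ℝ≥0∞).toReal ≤ (C * ‖x‖) ^ (2 : ℝ≥0∞).toReal := by
  have hx : Summable (fun k => ‖x k‖ ^ (2 : ℝ≥0∞).toReal) := (lp.memℓp x).summable htwo
  have h1 : ∑' k, ‖w k * x k‖ ^ (2 : ℝ≥0∞).toReal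
      ≤ ∑' k, C ^ (2 : ℝ≥0∞).toReal * ‖x k‖ ^ (2 : ℝ≥0∞).toReal := by
    refine Summable.tsum_le_tsum (fun k => ?_) (summable_base hC hw x) (hx.mul_left _)
    have h1 : ‖w k * x k‖ ≤ C * ‖x k‖ := by
      rw [norm_mul]
      exact mul_le_mul_of_nonneg_right (hw k) (norm_nonneg _)
    calc ‖w k * x k‖ ^ (2 : ℝ≥0∞).toReal ≤ (C * ‖x k‖) ^ (2 : ℝ≥0∞).toReal :=
          Real.rpow_le_rpow (norm_nonneg _) h1 htwo.le
      _ = C ^ (2 : ℝ≥0∞).toReal * ‖x k‖ ^ (2 : ℝ≥0∞).toReal :=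
          Real.mul_rpow hC (norm_nonneg _)
  rw [tsum_mul_left] at h1
  calc ∑' k, ‖w k * x k‖ ^ (2 : ℝ≥0∞).toReal
      ≤ C ^ (2 : ℝ≥0∞).toReal * ∑' k, ‖x k‖ ^ (2 : ℝ≥0∞).toReal := h1
    _ = (C * ‖x‖) ^ (2 : ℝ≥0∞).toReal := by
        rw [← lp.norm_rpow_eq_tsum htwo, Real.mul_rpow hC (norm_nonneg _)]

lemma norm_rpow_pushWfun (hg : Injective g) (x : H) :
    (fun m => ‖pushWfun g w x m‖ ^ (2 : ℝ≥0∞).toReal)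
      = Function.extend g (fun k => ‖w k * x k‖ ^ (2 : ℝ≥0∞).toReal) 0 := by
  funext m
  by_cases hm : ∃ k, g k = m
  · obtain ⟨k, rfl⟩ := hm
    rw [pushWfun, hg.extend_apply, hg.extend_apply]
  · rw [pushWfun, Function.extend_apply' _ _ _ hm, Function.extend_apply' _ _ _ hm]
    simp [Real.zero_rpow htwo.ne']

lemma memℓp_pushWfun (hg : Injective g) (hC : 0 ≤ C) (hw : ∀ k, ‖w k‖ ≤ C) (x : H) :
    Memℓp (pushWfun g w x) 2 := by
  apply memℓp_gen
  rw [norm_rpow_pushWfun hg]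
  exact (summable_extend_zero hg).2 (summable_base hC hw x)

lemma memℓp_pullWfun (hg : Injective g) (hC : 0 ≤ C) (hw : ∀ k, ‖w k‖ ≤ C) (x : H) :
    Memℓp (pullWfun g w x) 2 := by
  apply memℓp_gen
  have hx : Summable (fun k => ‖x (g k)‖ ^ (2 : ℝ≥0∞).toReal) :=
    ((lp.memℓp x).summable htwo).comp_injective hg
  refine Summable.of_nonneg_of_le (fun k => Real.rpow_nonneg (norm_nonneg _) _)
    (fun k => ?_) (hx.mul_left (C ^ (2 : ℝ≥0∞).toReal))
  have h1 : ‖w k * x (g k)‖ ≤ C * ‖x (g k)‖ := by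
    rw [norm_mul]; exact mul_le_mul_of_nonneg_right (hw k) (norm_nonneg _)
  calc ‖pullWfun g w x k‖ ^ (2 : ℝ≥0∞).toReal ≤ (C * ‖x (g k)‖) ^ (2 : ℝ≥0∞).toReal :=
        Real.rpow_le_rpow (norm_nonneg _) h1 htwo.le
    _ = C ^ (2 : ℝ≥0∞).toReal * ‖x (g k)‖ ^ (2 : ℝ≥0∞).toReal :=
        Real.mul_rpow hC (norm_nonneg _)

end builders
end Stmt13

namespace Stmt13
open Function

section clm

variable (g : ℕ → ℕ) (w : ℕ → ℂ) {C : ℝ}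

lemma pushWfun_add (hg : Injective g) (x y : H) :
    pushWfun g w (x + y) = pushWfun g w x + pushWfun g w y := by
  funext m
  by_cases hm : ∃ k, g k = m
  · obtain ⟨k, rfl⟩ := hm
    simp only [pushWfun, Pi.add_apply, hg.extend_apply, lp.coeFn_add]
    ring
  · simp only [pushWfun, Pi.add_apply, Function.extend_apply' _ _ _ hm, Pi.zero_apply, add_zero]

lemma pushWfun_smul (hg : Injective g) (c : ℂ) (x : H) :
    pushWfun g w (c • x) = c • pushWfun g w x := by
  funext m
  by_cases hm : ∃ k, g k = m
  · obtain ⟨k, rfl⟩ := hm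
    simp only [pushWfun, Pi.smul_apply, hg.extend_apply, lp.coeFn_smul, smul_eq_mul]
    ring
  · simp only [pushWfun, Pi.smul_apply, Function.extend_apply' _ _ _ hm, Pi.zero_apply,
      smul_eq_mul, mul_zero]

/-- push-type weighted operator -/
def pushW (hg : Injective g) (hC : 0 ≤ C) (hw : ∀ k, ‖w k‖ ≤ C) : H →L[ℂ] H :=
  LinearMap.mkContinuous
    { toFun := fun x => (⟨pushWfun g w x, memℓp_pushWfun hg hC hw x⟩ : H)
      map_add' := fun x y => lp.ext (pushWfun_add g w hg x y)
      map_smul' := fun c x => lp.ext (pushWfun_smul g w hg c x) }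
    C
    (by
      intro x
      refine lp.norm_le_of_tsum_le htwo (by positivity) ?_
      have : (fun m => ‖pushWfun g w x m‖ ^ (2 : ℝ≥0∞).toReal)
          = Function.extend g (fun k => ‖w k * x k‖ ^ (2 : ℝ≥0∞).toReal) 0 :=
        norm_rpow_pushWfun hg x
      calc ∑' m, ‖pushWfun g w x m‖ ^ (2 : ℝ≥0∞).toReal
          = ∑' k, ‖w k * x k‖ ^ (2 : ℝ≥0∞).toReal := by
            rw [show (fun m => ‖pushWfun g w x m‖ ^ (2 : ℝ≥0∞).toReal)
              = Function.extend g (fun k => ‖w k * x k‖ ^ (2 : ℝ≥0∞).toReal) 0 from this]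
            exact tsum_extend_zero hg _
        _ ≤ (C * ‖x‖) ^ (2 : ℝ≥0∞).toReal := tsum_base_le (by positivity) hw x)

lemma pushW_apply (hg : Injective g) (hC : 0 ≤ C) (hw : ∀ k, ‖w k‖ ≤ C) (x : H) (m : ℕ) :
    (pushW g w hg hC hw x : ℕ → ℂ) m = Function.extend g (fun k => w k * x k) 0 m := rfl

lemma norm_pushW_le (hg : Injective g) (hC : 0 ≤ C) (hw : ∀ k, ‖w k‖ ≤ C) :
    ‖pushW g w hg hC hw‖ ≤ C :=
  LinearMap.mkContinuous_norm_le _ hC _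

/-- pull-type weighted operator -/
def pullW (hg : Injective g) (hC : 0 ≤ C) (hw : ∀ k, ‖w k‖ ≤ C) : H →L[ℂ] H :=
  LinearMap.mkContinuous
    { toFun := fun x => (⟨pullWfun g w x, memℓp_pullWfun hg hC hw x⟩ : H)
      map_add' := fun x y => lp.ext (by
        funext k
        simp only [pullWfun, lp.coeFn_add, Pi.add_apply]
        ring)
      map_smul' := fun c x => lp.ext (by
        funext k
        simp only [pullWfun, lp.coeFn_smul, Pi.smul_apply, smul_eq_mul, RingHom.id_apply]
        ring) }
    C
    (by
      intro x
      refine lp.norm_le_of_tsum_le htwo (by positivity) ?_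
      have hx : Summable (fun k => ‖x (g k)‖ ^ (2 : ℝ≥0∞).toReal) :=
        ((lp.memℓp x).summable htwo).comp_injective hg
      have step1 : ∑' k, ‖w k * x (g k)‖ ^ (2 : ℝ≥0∞).toReal
          ≤ C ^ (2 : ℝ≥0∞).toReal * ∑' k, ‖x (g k)‖ ^ (2 : ℝ≥0∞).toReal := by
        rw [← tsum_mul_left]
        refine Summable.tsum_le_tsum (fun k => ?_) ?_ (hx.mul_left _)
        · have h1 : ‖w k * x (g k)‖ ≤ C * ‖x (g k)‖ := by
            rw [norm_mul]; exact mul_le_mul_of_nonneg_right (hw k) (norm_nonneg _)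
          calc ‖w k * x (g k)‖ ^ (2 : ℝ≥0∞).toReal ≤ (C * ‖x (g k)‖) ^ (2 : ℝ≥0∞).toReal :=
                Real.rpow_le_rpow (norm_nonneg _) h1 htwo.le
            _ = C ^ (2 : ℝ≥0∞).toReal * ‖x (g k)‖ ^ (2 : ℝ≥0∞).toReal :=
                Real.mul_rpow hC (norm_nonneg _)
        · refine Summable.of_nonneg_of_le (fun k => Real.rpow_nonneg (norm_nonneg _) _)
            (fun k => ?_) (hx.mul_left (C ^ (2 : ℝ≥0∞).toReal))
          have h1 : ‖w k * x (g k)‖ ≤ C * ‖x (g k)‖ := by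
            rw [norm_mul]; exact mul_le_mul_of_nonneg_right (hw k) (norm_nonneg _)
          calc ‖w k * x (g k)‖ ^ (2 : ℝ≥0∞).toReal ≤ (C * ‖x (g k)‖) ^ (2 : ℝ≥0∞).toReal :=
                Real.rpow_le_rpow (norm_nonneg _) h1 htwo.le
            _ = C ^ (2 : ℝ≥0∞).toReal * ‖x (g k)‖ ^ (2 : ℝ≥0∞).toReal :=
                Real.mul_rpow hC (norm_nonneg _)
      have step2 : ∑' k, ‖x (g k)‖ ^ (2 : ℝ≥0∞).toReal ≤ ∑' i, ‖x i‖ ^ (2 : ℝ≥0∞).toReal :=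
        tsum_comp_le_tsum_of_inj ((lp.memℓp x).summable htwo)
          (fun i => Real.rpow_nonneg (norm_nonneg _) _) hg
      calc ∑' k, ‖pullWfun g w x k‖ ^ (2 : ℝ≥0∞).toReal
          ≤ C ^ (2 : ℝ≥0∞).toReal * ∑' k, ‖x (g k)‖ ^ (2 : ℝ≥0∞).toReal := step1
        _ ≤ C ^ (2 : ℝ≥0∞).toReal * ∑' i, ‖x i‖ ^ (2 : ℝ≥0∞).toReal := by
            refine mul_le_mul_of_nonneg_left step2 (by positivity)
        _ = (C * ‖x‖) ^ (2 : ℝ≥0∞).toReal := by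
            rw [← lp.norm_rpow_eq_tsum htwo, Real.mul_rpow hC (norm_nonneg _)])

lemma pullW_apply (hg : Injective g) (hC : 0 ≤ C) (hw : ∀ k, ‖w k‖ ≤ C) (x : H) (k : ℕ) :
    (pullW g w hg hC hw x : ℕ → ℂ) k = w k * x (g k) := rfl

lemma norm_pullW_le (hg : Injective g) (hC : 0 ≤ C) (hw : ∀ k, ‖w k‖ ≤ C) :
    ‖pullW g w hg hC hw‖ ≤ C :=
  LinearMap.mkContinuous_norm_le _ hC _

end clm
end Stmt13

namespace Stmt13
open Function ContinuousLinearMap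

lemma hgE : Function.Injective (fun k : ℕ => 2 * k) := fun a b h => by simpa using h
lemma hgO : Function.Injective (fun k : ℕ => 2 * k + 1) := fun a b h => by simpa using h

lemma norm_one_le : ∀ k : ℕ, ‖(fun _ : ℕ => (1:ℂ)) k‖ ≤ (1:ℝ) := fun _ => by simp

/-- the isometry onto the even coordinates -/
def aOp : H →L[ℂ] H := pushW (fun k => 2 * k) (fun _ => 1) hgE zero_le_one norm_one_le

/-- its left inverse -/
def rOp : H →L[ℂ] H := pullW (fun k => 2 * k) (fun _ => 1) hgE zero_le_one norm_one_le

lemma wc_norm : ∀ k : ℕ, ‖((2:ℂ)⁻¹ ^ k : ℂ)‖ ≤ (1:ℝ) := by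
  intro k
  rw [norm_pow, norm_inv]
  simp only [Complex.norm_ofNat]
  exact pow_le_one₀ (by norm_num) (by norm_num)

/-- the weighted map onto the odd coordinates -/
def cOp : H →L[ℂ] H := pushW (fun k => 2 * k + 1) (fun k => (2:ℂ)⁻¹ ^ k) hgO zero_le_one wc_norm

lemma Sw_norm (n : ℕ) : ∀ k : ℕ, ‖(if k ≤ n then (2:ℂ) ^ k else 0)‖ ≤ ((2:ℝ) ^ n) := by
  intro k
  by_cases h : k ≤ n
  · rw [if_pos h, norm_pow]
    simp only [Complex.norm_ofNat]
    exact pow_le_pow_right₀ (by norm_num) h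
  · rw [if_neg h]; simpa using by positivity

/-- partial right inverse of `cOp` -/
def Sn (n : ℕ) : H →L[ℂ] H :=
  pullW (fun k => 2 * k + 1) (fun k => if k ≤ n then (2:ℂ) ^ k else 0) hgO (by positivity)
    (Sw_norm n)

lemma mask_norm (n : ℕ) : ∀ m : ℕ, ‖(if Even m ∨ m ≤ 2 * n + 1 then (1:ℂ) else 0)‖ ≤ (1:ℝ) := by
  intro m; split <;> simp

/-- the coordinate mask operator, equal to `aOp ∘ rOp + cOp ∘ Sn n` -/
def mask (n : ℕ) : H →L[ℂ] H :=
  pushW id (fun m => if Even m ∨ m ≤ 2 * n + 1 then (1:ℂ) else 0) injective_id zero_le_one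
    (mask_norm n)

lemma tailw_norm (n : ℕ) :
    ∀ k : ℕ, ‖(if k ≤ n then 0 else (2:ℂ)⁻¹ ^ k)‖ ≤ ((2:ℝ)⁻¹ ^ (n+1)) := by
  intro k
  by_cases h : k ≤ n
  · rw [if_pos h]; simpa using by positivity
  · rw [if_neg h, norm_pow, norm_inv]
    simp only [Complex.norm_ofNat]
    exact pow_le_pow_of_le_one (by norm_num) (by norm_num) (by omega)

/-- the tail operator `mask n ∘ cOp - cOp = - tail n` -/
def tail (n : ℕ) : H →L[ℂ] H :=
  pushW (fun k => 2 * k + 1) (fun k => if k ≤ n then 0 else (2:ℂ)⁻¹ ^ k) hgO (by positivity)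
    (tailw_norm n)

end Stmt13

namespace Stmt13
open Function ContinuousLinearMap

lemma not_even_in_range (j : ℕ) : ¬∃ k : ℕ, 2 * k = 2 * j + 1 := by
  rintro ⟨k, hk⟩; omega

lemma not_odd_in_range (j : ℕ) : ¬∃ k : ℕ, 2 * k + 1 = 2 * j := by
  rintro ⟨k, hk⟩; omega

lemma aOp_apply_even (x : H) (k : ℕ) : (aOp x : ℕ → ℂ) (2 * k) = x k := by
  show Function.extend (fun k : ℕ => 2 * k) (fun k => (1:ℂ) * x k) 0 ((fun k : ℕ => 2 * k) k)
    = x k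
  rw [hgE.extend_apply]; ring

lemma aOp_apply_odd (x : H) (j : ℕ) : (aOp x : ℕ → ℂ) (2 * j + 1) = 0 := by
  show Function.extend (fun k : ℕ => 2 * k) (fun k => (1:ℂ) * x k) 0 (2 * j + 1) = 0
  rw [Function.extend_apply' _ _ _ (not_even_in_range j)]; rfl

lemma cOp_apply_odd (x : H) (k : ℕ) : (cOp x : ℕ → ℂ) (2 * k + 1) = (2:ℂ)⁻¹ ^ k * x k := by
  show Function.extend (fun k : ℕ => 2 * k + 1) (fun k => (2:ℂ)⁻¹ ^ k * x k) 0
    ((fun k : ℕ => 2 * k + 1) k) = _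
  rw [hgO.extend_apply]

lemma cOp_apply_even (x : H) (j : ℕ) : (cOp x : ℕ → ℂ) (2 * j) = 0 := by
  show Function.extend (fun k : ℕ => 2 * k + 1) (fun k => (2:ℂ)⁻¹ ^ k * x k) 0 (2 * j) = 0
  rw [Function.extend_apply' _ _ _ (not_odd_in_range j)]; rfl

lemma rOp_apply' (x : H) (k : ℕ) : (rOp x : ℕ → ℂ) k = x (2 * k) := by
  show (1:ℂ) * x (2 * k) = x (2 * k); ring

lemma Sn_apply' (n : ℕ) (x : H) (k : ℕ) :
    (Sn n x : ℕ → ℂ) k = (if k ≤ n then (2:ℂ) ^ k else 0) * x (2 * k + 1) := rfl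

lemma mask_apply' (n : ℕ) (x : H) (m : ℕ) :
    (mask n x : ℕ → ℂ) m = (if Even m ∨ m ≤ 2 * n + 1 then (1:ℂ) else 0) * x m := by
  show Function.extend (id : ℕ → ℕ)
    (fun k => (if Even k ∨ k ≤ 2 * n + 1 then (1:ℂ) else 0) * x k) (0 : ℕ → ℂ) (id m) = _
  rw [injective_id.extend_apply]

lemma tail_apply_odd (n : ℕ) (x : H) (k : ℕ) :
    (tail n x : ℕ → ℂ) (2 * k + 1) = (if k ≤ n then 0 else (2:ℂ)⁻¹ ^ k) * x k := by
  show Function.extend (fun k : ℕ => 2 * k + 1)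
    (fun k => (if k ≤ n then 0 else (2:ℂ)⁻¹ ^ k) * x k) (0 : ℕ → ℂ)
    ((fun k : ℕ => 2 * k + 1) k) = _
  rw [hgO.extend_apply]

lemma tail_apply_even (n : ℕ) (x : H) (j : ℕ) : (tail n x : ℕ → ℂ) (2 * j) = 0 := by
  show Function.extend (fun k : ℕ => 2 * k + 1)
    (fun k => (if k ≤ n then 0 else (2:ℂ)⁻¹ ^ k) * x k) (0 : ℕ → ℂ) (2 * j) = 0
  rw [Function.extend_apply' _ _ _ (not_odd_in_range j)]; rfl

/-- even/odd case split for coordinates -/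
lemma coord_cases (P : ℕ → Prop) (he : ∀ j, P (2 * j)) (ho : ∀ j, P (2 * j + 1)) : ∀ m, P m := by
  intro m
  rcases Nat.even_or_odd m with h | h
  · obtain ⟨j, hj⟩ := h
    have hm : m = 2 * j := by omega
    rw [hm]; exact he j
  · obtain ⟨j, hj⟩ := h
    have hm : m = 2 * j + 1 := by omega
    rw [hm]; exact ho j

lemma rOp_comp_aOp : rOp ∘L aOp = ContinuousLinearMap.id ℂ H := by
  refine ContinuousLinearMap.ext fun x => lp.ext (funext fun k => ?_)
  show (rOp (aOp x) : ℕ → ℂ) k = x k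
  rw [rOp_apply', aOp_apply_even]

lemma mask_comp_aOp (n : ℕ) : mask n ∘L aOp = aOp := by
  refine ContinuousLinearMap.ext fun x => lp.ext (funext ?_)
  refine coord_cases _ (fun j => ?_) (fun j => ?_)
  · show (mask n (aOp x) : ℕ → ℂ) (2 * j) = (aOp x : ℕ → ℂ) (2 * j)
    rw [mask_apply', if_pos (Or.inl (by exact ⟨j, by ring⟩)), one_mul]
  · show (mask n (aOp x) : ℕ → ℂ) (2 * j + 1) = (aOp x : ℕ → ℂ) (2 * j + 1)
    rw [mask_apply', aOp_apply_odd, mul_zero]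


lemma mask_eq (n : ℕ) : aOp ∘L rOp + cOp ∘L Sn n = mask n := by
  refine ContinuousLinearMap.ext fun x => lp.ext (funext ?_)
  refine coord_cases _ (fun j => ?_) (fun j => ?_)
  · show (aOp (rOp x) : ℕ → ℂ) (2 * j) + (cOp (Sn n x) : ℕ → ℂ) (2 * j)
      = (mask n x : ℕ → ℂ) (2 * j)
    rw [aOp_apply_even, rOp_apply', cOp_apply_even, mask_apply',
      if_pos (Or.inl ⟨j, by ring⟩), add_zero, one_mul]
  · show (aOp (rOp x) : ℕ → ℂ) (2 * j + 1) + (cOp (Sn n x) : ℕ → ℂ) (2 * j + 1)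
      = (mask n x : ℕ → ℂ) (2 * j + 1)
    rw [aOp_apply_odd, cOp_apply_odd, Sn_apply', mask_apply', zero_add]
    by_cases h : j ≤ n
    · rw [if_pos h, if_pos (Or.inr (by omega))]
      field_simp
      rw [← mul_pow]; norm_num
    · rw [if_neg h, if_neg ?side]
      · ring
      case side =>
        rintro (⟨t, ht⟩ | hle) 
        · omega
        · omega

lemma mask_comp_cOp (n : ℕ) : mask n ∘L cOp + tail n = cOp := by
  refine ContinuousLinearMap.ext fun x => lp.ext (funext ?_)
  refine coord_cases _ (fun j => ?_) (fun j => ?_)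
  · show (mask n (cOp x) : ℕ → ℂ) (2 * j) + (tail n x : ℕ → ℂ) (2 * j)
      = (cOp x : ℕ → ℂ) (2 * j)
    rw [mask_apply', cOp_apply_even, tail_apply_even, mul_zero]; simp
  · show (mask n (cOp x) : ℕ → ℂ) (2 * j + 1) + (tail n x : ℕ → ℂ) (2 * j + 1)
      = (cOp x : ℕ → ℂ) (2 * j + 1)
    rw [mask_apply', cOp_apply_odd, tail_apply_odd]
    by_cases h : j ≤ n
    · rw [if_pos (Or.inr (by omega)), if_pos h]
      ring
    · rw [if_neg ?side, if_neg h]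
      · ring
      case side =>
        rintro (⟨t, ht⟩ | hle)
        · omega
        · omega

end Stmt13

namespace Stmt13
open Function ContinuousLinearMap Filter

lemma norm_aOp_le : ‖aOp‖ ≤ 1 := norm_pushW_le _ _ _ _ _
lemma norm_mask_le (n : ℕ) : ‖mask n‖ ≤ 1 := norm_pushW_le _ _ _ _ _
lemma norm_tail_le (n : ℕ) : ‖tail n‖ ≤ (2⁻¹:ℝ) ^ (n+1) := norm_pushW_le _ _ _ _ _

/-- the right ideal generated by `aOp` and `cOp` (pre-closure) -/
def W : Submodule ℂ (H →L[ℂ] H) where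
  carrier := {X | ∃ R S, X = aOp ∘L R + cOp ∘L S}
  zero_mem' := ⟨0, 0, by simp⟩
  add_mem' := by
    rintro X Y ⟨R, S, rfl⟩ ⟨R', S', rfl⟩
    exact ⟨R + R', S + S', by rw [comp_add, comp_add]; abel⟩
  smul_mem' := by
    rintro t X ⟨R, S, rfl⟩
    refine ⟨t • R, t • S, ?_⟩
    rw [smul_add, ContinuousLinearMap.comp_smul, ContinuousLinearMap.comp_smul]

/-- the closed right ideal -/
def AA : Submodule ℂ (H →L[ℂ] H) := W.topologicalClosure

lemma AA_isClosed : IsClosed (AA : Set (H →L[ℂ] H)) :=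
  Submodule.isClosed_topologicalClosure W

lemma mem_AA_iff {x : H →L[ℂ] H} : x ∈ AA ↔ x ∈ closure (W : Set (H →L[ℂ] H)) := Iff.rfl

lemma AA_right_ideal : ∀ x ∈ AA, ∀ T : H →L[ℂ] H, x ∘L T ∈ AA := by
  intro x hx T
  have hφ : Continuous (fun y : H →L[ℂ] H => y ∘L T) :=
    ((ContinuousLinearMap.compL ℂ H H H).flip T).continuous
  have hmaps : Set.MapsTo (fun y : H →L[ℂ] H => y ∘L T) (W : Set (H →L[ℂ] H))
      (W : Set (H →L[ℂ] H)) := by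
    rintro y ⟨R, S, rfl⟩
    refine ⟨R ∘L T, S ∘L T, ?_⟩
    show (aOp ∘L R + cOp ∘L S) ∘L T = _
    rw [add_comp]
    rfl
  exact map_mem_closure (f := fun y : H →L[ℂ] H => y ∘L T) hφ hx hmaps

lemma aOp_mem_W : aOp ∈ W := ⟨ContinuousLinearMap.id ℂ H, 0, by simp⟩
lemma cOp_mem_W : cOp ∈ W := ⟨0, ContinuousLinearMap.id ℂ H, by simp⟩

lemma aOp_mem_AA : aOp ∈ AA := W.le_topologicalClosure aOp_mem_W
lemma cOp_mem_AA : cOp ∈ AA := W.le_topologicalClosure cOp_mem_W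

/-- the approximate identity -/
def un (n : ℕ) : H →L[ℂ] H := aOp ∘L rOp + cOp ∘L Sn n

lemma un_mem_AA (n : ℕ) : un n ∈ AA := W.le_topologicalClosure ⟨rOp, Sn n, rfl⟩

lemma un_eq_mask (n : ℕ) : un n = mask n := mask_eq n

lemma norm_un_le (n : ℕ) : ‖un n‖ ≤ 1 := by rw [un_eq_mask]; exact norm_mask_le n

lemma mask_X_sub (n : ℕ) (R S : H →L[ℂ] H) :
    mask n ∘L (aOp ∘L R + cOp ∘L S) - (aOp ∘L R + cOp ∘L S) = -(tail n ∘L S) := by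
  have hma : mask n * aOp = aOp := mask_comp_aOp n
  have hmc : mask n * cOp = cOp - tail n := by
    rw [ContinuousLinearMap.mul_def, eq_sub_iff_add_eq]
    exact mask_comp_cOp n
  show mask n * (aOp * R + cOp * S) - (aOp * R + cOp * S) = -(tail n * S)
  rw [mul_add, ← mul_assoc, ← mul_assoc, hma, hmc, sub_mul]
  abel

lemma cai : ∀ b ∈ AA, Tendsto (fun n => (un n) ∘L b) atTop (nhds b) := by
  intro b hb
  rw [Metric.tendsto_atTop]
  intro ε hε
  obtain ⟨X, hXW, hbX⟩ := Metric.mem_closure_iff.1 hb (ε/3) (by positivity)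
  obtain ⟨R, S, rfl⟩ := hXW
  obtain ⟨N, hN⟩ := exists_pow_lt_of_lt_one
    (show (0:ℝ) < ε/(3*(‖S‖+1)) by positivity) (show (2⁻¹:ℝ) < 1 by norm_num)
  refine ⟨N, fun n hn => ?_⟩
  set X := aOp ∘L R + cOp ∘L S with hXdef
  have hb1 : ‖b - X‖ < ε/3 := by
    rw [← dist_eq_norm]; exact hbX
  have htail : ‖tail n ∘L S‖ ≤ (2⁻¹:ℝ)^(n+1) * ‖S‖ :=
    le_trans (opNorm_comp_le _ _) (by
      exact mul_le_mul_of_nonneg_right (norm_tail_le n) (norm_nonneg _))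
  have hpow : (2⁻¹:ℝ)^(n+1) * ‖S‖ < ε/3 := by
    have h1 : (2⁻¹:ℝ)^(n+1) ≤ (2⁻¹:ℝ)^N :=
      pow_le_pow_of_le_one (by norm_num) (by norm_num) (by omega)
    have h2 : (2⁻¹:ℝ)^(n+1) * ‖S‖ ≤ (2⁻¹:ℝ)^N * (‖S‖+1) := by
      have := norm_nonneg S
      nlinarith [pow_nonneg (show (0:ℝ) ≤ 2⁻¹ by norm_num) N,
        pow_nonneg (show (0:ℝ) ≤ 2⁻¹ by norm_num) (n+1)]
    have hpos : (0:ℝ) < ‖S‖+1 := by positivity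
    have h3 : (2⁻¹:ℝ)^N * (‖S‖+1) < ε/(3*(‖S‖+1)) * (‖S‖+1) :=
      mul_lt_mul_of_pos_right hN hpos
    have h4 : ε/(3*(‖S‖+1)) * (‖S‖+1) = ε/3 := by
      rw [div_mul_eq_mul_div, mul_comm (3:ℝ) (‖S‖+1), ← div_div,
        mul_div_assoc, div_self (ne_of_gt hpos), mul_one]
    linarith
  have key : un n ∘L b - b = un n ∘L (b - X) + (mask n ∘L X - X) + (X - b) := by
    rw [un_eq_mask]
    show mask n * b - b = mask n * (b - X) + (mask n * X - X) + (X - b)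
    rw [mul_sub]
    abel
  have hnorm : ‖un n ∘L b - b‖ < ε := by
    rw [key]
    have e1 : ‖un n ∘L (b - X)‖ ≤ ‖b - X‖ := by
      refine le_trans (opNorm_comp_le _ _) ?_
      have := norm_un_le n
      nlinarith [norm_nonneg (b - X)]
    have e2 : ‖mask n ∘L X - X‖ < ε/3 := by
      rw [hXdef, mask_X_sub, norm_neg]
      exact lt_of_le_of_lt htail hpow
    have e3 : ‖X - b‖ < ε/3 := by rwa [norm_sub_rev]
    calc ‖un n ∘L (b - X) + (mask n ∘L X - X) + (X - b)‖
        ≤ ‖un n ∘L (b - X)‖ + ‖mask n ∘L X - X‖ + ‖X - b‖ := norm_add₃_le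
      _ < ε := by linarith
  rw [dist_eq_norm]
  exact hnorm

end Stmt13

namespace Stmt13
open Function ContinuousLinearMap Filter

lemma cOp_single (k : ℕ) :
    cOp (lp.single 2 k ((2:ℂ) ^ k)) = lp.single 2 (2 * k + 1) (1:ℂ) := by
  refine lp.ext (funext ?_)
  refine coord_cases _ (fun j => ?_) (fun j => ?_)
  · show (cOp (lp.single 2 k ((2:ℂ) ^ k)) : ℕ → ℂ) (2 * j) = _
    rw [cOp_apply_even, lp.single_apply_ne _ _ _ (show 2 * j ≠ 2 * k + 1 by omega)]
  · show (cOp (lp.single 2 k ((2:ℂ) ^ k)) : ℕ → ℂ) (2 * j + 1) = _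
    rw [cOp_apply_odd]
    by_cases h : j = k
    · subst h
      rw [lp.single_apply_self, lp.single_apply_self]
      rw [inv_pow, inv_mul_cancel₀ (pow_ne_zero _ (two_ne_zero))]
    · rw [lp.single_apply_ne _ _ _ (show j ≠ k from h),
        lp.single_apply_ne _ _ _ (show 2 * j + 1 ≠ 2 * k + 1 by omega), mul_zero]

lemma norm_delta (m : ℕ) : ‖(lp.single 2 m (1:ℂ) : H)‖ = 1 := by
  have := lp.norm_single (E := fun _ : ℕ => ℂ) (p := 2) (by norm_num) m (1:ℂ)
  simpa using this

lemma divergence :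
    ∀ e : ℕ → (H →L[ℂ] H), (∀ n, e n ∈ AA) → (∀ n, ‖e n‖ ≤ 1) →
      (∀ b ∈ AA, Tendsto (fun n => (e n) ∘L b) atTop (nhds b)) →
      ¬ ∃ L : H →L[ℂ] H, Tendsto (fun n => aOp ∘L (e n)) atTop (nhds L) := by
  rintro e hmem _hnorm hcai ⟨L, hL⟩
  set E : H →L[ℂ] H := rOp ∘L L with hEdef
  -- e n → E
  have hten : Tendsto e atTop (nhds E) := by
    have h1 : Tendsto (fun n => rOp ∘L (aOp ∘L e n)) atTop (nhds (rOp ∘L L)) := by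
      have hc : Continuous (fun y : H →L[ℂ] H => rOp ∘L y) :=
        (ContinuousLinearMap.compL ℂ H H H rOp).continuous
      exact ((hc.tendsto L).comp hL)
    have h2 : (fun n => rOp ∘L (aOp ∘L e n)) = e := by
      funext n
      show rOp * (aOp * e n) = e n
      rw [← mul_assoc]
      have : rOp * aOp = 1 := by
        rw [ContinuousLinearMap.mul_def, rOp_comp_aOp]; rfl
      rw [this, one_mul]
    rwa [h2] at h1
  have hE_mem : E ∈ AA := AA_isClosed.mem_of_tendsto hten (Filter.Eventually.of_forall hmem)
  have hEc : E ∘L cOp = cOp := by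
    have h1 : Tendsto (fun n => e n ∘L cOp) atTop (nhds (E ∘L cOp)) := by
      have hc : Continuous (fun y : H →L[ℂ] H => y ∘L cOp) :=
        ((ContinuousLinearMap.compL ℂ H H H).flip cOp).continuous
      exact (hc.tendsto E).comp hten
    exact tendsto_nhds_unique h1 (hcai cOp cOp_mem_AA)
  -- approximate E by an element of W
  obtain ⟨X, hXW, hdist⟩ := Metric.mem_closure_iff.1 hE_mem (1/2) (by norm_num)
  obtain ⟨R, S, rfl⟩ := hXW
  -- choose k with (1/2)^k * ‖S‖ < 1/4
  obtain ⟨k, hk⟩ := exists_pow_lt_of_lt_one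
    (show (0:ℝ) < (1/4)/(‖S‖+1) by positivity) (show (2⁻¹:ℝ) < 1 by norm_num)
  have hSpos : (0:ℝ) < ‖S‖+1 := by positivity
  have hks : (2⁻¹:ℝ)^k * ‖S‖ < 1/4 := by
    have h1 : (2⁻¹:ℝ)^k * ‖S‖ ≤ (2⁻¹:ℝ)^k * (‖S‖+1) := by
      have := pow_nonneg (show (0:ℝ) ≤ 2⁻¹ by norm_num) k
      nlinarith
    have h2 : (2⁻¹:ℝ)^k * (‖S‖+1) < (1/4)/(‖S‖+1) * (‖S‖+1) :=
      mul_lt_mul_of_pos_right hk hSpos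
    have h3 : (1/4:ℝ)/(‖S‖+1) * (‖S‖+1) = 1/4 := by
      rw [div_mul_eq_mul_div, mul_div_assoc, div_self (ne_of_gt hSpos), mul_one]
    linarith
  -- the test vector
  set δ : H := lp.single 2 (2 * k + 1) (1:ℂ) with hδdef
  have hδnorm : ‖δ‖ = 1 := norm_delta _
  have hEδ : E δ = δ := by
    have h1 : E (cOp (lp.single 2 k ((2:ℂ) ^ k))) = cOp (lp.single 2 k ((2:ℂ) ^ k)) := by
      have := congrArg (fun T : H →L[ℂ] H => T (lp.single 2 k ((2:ℂ) ^ k))) hEc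
      simpa using this
    rwa [cOp_single] at h1
  -- coordinate estimate
  set X : H →L[ℂ] H := aOp ∘L R + cOp ∘L S with hXdef
  have hcoordX : (X δ : ℕ → ℂ) (2 * k + 1) = (2:ℂ)⁻¹ ^ k * (S δ : ℕ → ℂ) k := by
    have : (X δ : ℕ → ℂ) (2 * k + 1)
        = (aOp (R δ) : ℕ → ℂ) (2 * k + 1) + (cOp (S δ) : ℕ → ℂ) (2 * k + 1) := rfl
    rw [this, aOp_apply_odd, cOp_apply_odd, zero_add]
  have hcoordE : (E δ : ℕ → ℂ) (2 * k + 1) = 1 := by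
    rw [hEδ, hδdef]
    exact lp.single_apply_self _ _ _
  have hXEhalf : ‖X - E‖ < 1/2 := by
    rw [← dist_eq_norm, dist_comm]
    exact hdist
  have hXE : ‖X δ - E δ‖ ≤ ‖X - E‖ := by
    calc ‖X δ - E δ‖ = ‖(X - E) δ‖ := by rw [ContinuousLinearMap.sub_apply]
      _ ≤ ‖X - E‖ * ‖δ‖ := le_opNorm _ _
      _ = ‖X - E‖ := by rw [hδnorm, mul_one]
  have hcoord : ‖(X δ : ℕ → ℂ) (2 * k + 1) - (E δ : ℕ → ℂ) (2 * k + 1)‖ ≤ ‖X δ - E δ‖ := by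
    have h1 : (X δ : ℕ → ℂ) (2 * k + 1) - (E δ : ℕ → ℂ) (2 * k + 1)
        = ((X δ - E δ : H) : ℕ → ℂ) (2 * k + 1) := by
      rw [lp.coeFn_sub]; rfl
    rw [h1]
    exact lp.norm_apply_le_norm (by norm_num) (X δ - E δ) (2 * k + 1)
  have hSδk : ‖(S δ : ℕ → ℂ) k‖ ≤ ‖S‖ := by
    refine le_trans (lp.norm_apply_le_norm (by norm_num) (S δ) k) ?_
    calc ‖S δ‖ ≤ ‖S‖ * ‖δ‖ := le_opNorm _ _
      _ = ‖S‖ := by rw [hδnorm, mul_one]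
  have hnorm_a : ‖(2:ℂ)⁻¹ ^ k * (S δ : ℕ → ℂ) k‖ ≤ (2⁻¹:ℝ)^k * ‖S‖ := by
    rw [norm_mul, norm_pow, norm_inv]
    simp only [Complex.norm_ofNat]
    exact mul_le_mul_of_nonneg_left hSδk (by positivity)
  have hlow : 1 - ‖(2:ℂ)⁻¹ ^ k * (S δ : ℕ → ℂ) k‖
      ≤ ‖(2:ℂ)⁻¹ ^ k * (S δ : ℕ → ℂ) k - 1‖ := by
    have h2 := norm_sub_norm_le (1:ℂ) ((2:ℂ)⁻¹ ^ k * (S δ : ℕ → ℂ) k)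
    rw [norm_one, norm_sub_rev] at h2
    exact h2
  rw [hcoordX, hcoordE] at hcoord
  linarith

end Stmt13

end

/-- There exist a complex Hilbert space `H`, a norm-closed right ideal `A` of
`B(H)` and `a ∈ A` such that `A` has a contractive (sequential) approximate left
identity, yet for every contractive approximate left identity `(e_n)` of `A`, the
sequence `(a ∘ e_n)` fails to converge in norm. -/
theorem stmt_13 :
    ∃ (H : Type) (_ : NormedAddCommGroup H) (_ : InnerProductSpace ℂ H)
      (_ : CompleteSpace H) (A : Submodule ℂ (H →L[ℂ] H)),
      IsClosed (A : Set (H →L[ℂ] H)) ∧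
      (∀ a ∈ A, ∀ T : H →L[ℂ] H, a ∘L T ∈ A) ∧
      ∃ a ∈ A,
        (∃ u : ℕ → (H →L[ℂ] H), (∀ n, u n ∈ A) ∧ (∀ n, ‖u n‖ ≤ 1) ∧
          ∀ b ∈ A, Filter.Tendsto (fun n => (u n) ∘L b) Filter.atTop (nhds b)) ∧
        (∀ e : ℕ → (H →L[ℂ] H), (∀ n, e n ∈ A) → (∀ n, ‖e n‖ ≤ 1) →
          (∀ b ∈ A, Filter.Tendsto (fun n => (e n) ∘L b) Filter.atTop (nhds b)) →
          ¬ ∃ L : H →L[ℂ] H, Filter.Tendsto (fun n => a ∘L (e n)) Filter.atTop (nhds L)) := by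
  refine ⟨Stmt13.H, inferInstance, inferInstance, inferInstance, Stmt13.AA,
    Stmt13.AA_isClosed, Stmt13.AA_right_ideal, Stmt13.aOp, Stmt13.aOp_mem_AA,
    ⟨Stmt13.un, Stmt13.un_mem_AA, Stmt13.norm_un_le, Stmt13.cai⟩, Stmt13.divergence⟩
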